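/- Let V₁, V₂, V₃ be finite-dimensional 𝔽-vector spaces and f : V₁ → V₂, g : V₃ → V₂ linear maps, regarded as a persistence module M over the zigzag poset {•₁ ≤ •₂ ≥ •₃}. Suppose M ≅ ⊕_{i∈F} V_{I_i} is a decomposition into interval modules (F a finite index set). Then the multiplicities of the intervals are: #{i : I_i = {•₁}} = dim V₁ − rank f; #{i : I_i = {•₃}} = dim V₃ − rank g; #{i : I_i = {•₂}} = dim V₂ − rank f − rank g + dim(range f ∩ range g); #{i : I_i = {•₁,•₂}} = rank f − dim(range f ∩ range g); #{i : I_i = {•₂,•₃}} = rank g − dim(range f ∩ range g); #{i : I_i = {•₁,•₂,•₃}} = dim(range f ∩ range g). -/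

import Mathlib

open scoped Classical
open Module

noncomputable section

/-- A pointwise finite-dimensional persistence module over a poset `P`. -/
structure PersMod (𝔽 : Type) [Field 𝔽] (P : Type) [PartialOrder P] where
  V : P → Type
  [iAdd : ∀ p, AddCommGroup (V p)]
  [iMod : ∀ p, Module 𝔽 (V p)]
  [iFin : ∀ p, FiniteDimensional 𝔽 (V p)]
  φ : ∀ {p q : P}, p ≤ q → (V p →ₗ[𝔽] V q)
  φ_refl : ∀ p : P, φ (le_refl p) = LinearMap.id
  φ_comp : ∀ {p q r : P} (hpq : p ≤ q) (hqr : q ≤ r),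
    (φ hqr).comp (φ hpq) = φ (le_trans hpq hqr)

attribute [instance] PersMod.iAdd PersMod.iMod PersMod.iFin

/-- A poset is connected if any two elements are joined by a finite zigzag of
comparable elements. -/
def ZigzagConnected (P : Type) [PartialOrder P] : Prop :=
  ∀ p q : P, Relation.ReflTransGen (fun a b : P => a ≤ b ∨ b ≤ a) p q

section SetNotions

variable {P : Type} [PartialOrder P]

/-- Convexity of a subset of a poset. -/
def SetConvex (I : Set P) : Prop :=
  ∀ ⦃p q r : P⦄, p ∈ I → r ∈ I → p ≤ q → q ≤ r → q ∈ I

/-- Connectedness of a subset: any two points are joined by a zigzag of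
comparable elements staying inside the subset. -/
def SetZigzagConn (I : Set P) : Prop :=
  ∀ p ∈ I, ∀ q ∈ I,
    Relation.ReflTransGen (fun a b : P => a ∈ I ∧ b ∈ I ∧ (a ≤ b ∨ b ≤ a)) p q

/-- An interval of a poset: nonempty, convex and connected. -/
def IsIntervalSet (I : Set P) : Prop :=
  I.Nonempty ∧ SetConvex I ∧ SetZigzagConn I

/-- A path-connected subposet (member of `Con(P)`): nonempty and any two of its
points are joined by a sequence in `I` in which consecutive elements are related
by the covering relation of `P`. -/
def IsPathConnIn (I : Set P) : Prop :=
  I.Nonempty ∧ ∀ p ∈ I, ∀ q ∈ I,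
    Relation.ReflTransGen (fun a b : P => a ∈ I ∧ b ∈ I ∧ (a ⋖ b ∨ b ⋖ a)) p q

lemma setConvex_univ : SetConvex (Set.univ : Set P) := by
  intro p q r _ _ _ _; trivial

end SetNotions

namespace PersMod

variable {𝔽 : Type} [Field 𝔽] {P : Type} [PartialOrder P]

/-- The limit of a persistence module: the module of compatible sections. -/
def sections (M : PersMod 𝔽 P) : Submodule 𝔽 (∀ p, M.V p) where
  carrier := {x | ∀ (p q : P) (h : p ≤ q), M.φ h (x p) = x q}
  add_mem' := by
    intro x y hx hy p q h
    simp only [Pi.add_apply, map_add]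
    rw [hx p q h, hy p q h]
  zero_mem' := by intro p q h; simp
  smul_mem' := by
    intro c x hx p q h
    simp only [Pi.smul_apply, map_smul]
    rw [hx p q h]

/-- The relations defining the colimit of a persistence module. -/
def colimRel (M : PersMod 𝔽 P) : Submodule 𝔽 (DirectSum P fun p => M.V p) :=
  Submodule.span 𝔽 {z | ∃ (p q : P) (h : p ≤ q) (v : M.V p),
    z = DirectSum.lof 𝔽 P (fun p => M.V p) q (M.φ h v)
      - DirectSum.lof 𝔽 P (fun p => M.V p) p v}

/-- The colimit of a persistence module. -/
abbrev colim (M : PersMod 𝔽 P) :=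
  (DirectSum P fun p => M.V p) ⧸ M.colimRel

/-- The canonical map `lim M → colim M` factored through the value at `p`,
i.e. `ι_p ∘ π_p`. -/
def canonicalMapAt (M : PersMod 𝔽 P) (p : P) : M.sections →ₗ[𝔽] M.colim :=
  (M.colimRel.mkQ.comp (DirectSum.lof 𝔽 P (fun q => M.V q) p)).comp
    ((LinearMap.proj p).comp M.sections.subtype)

/-- The rank of the canonical map `lim M → colim M` computed through `p`. -/
def genRankAt (M : PersMod 𝔽 P) (p : P) : ℕ :=
  finrank 𝔽 (LinearMap.range (M.canonicalMapAt p))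

/-- The generalized rank of a persistence module over a (connected) poset. -/
def genRank (M : PersMod 𝔽 P) [Nonempty P] : ℕ :=
  M.genRankAt (Classical.arbitrary P)

/-- Restriction of a persistence module to a subposet. -/
def restrict (M : PersMod 𝔽 P) (I : Set P) : PersMod 𝔽 I where
  V := fun i => M.V i.val
  φ := fun {i j} h => M.φ h
  φ_refl := fun i => M.φ_refl i.val
  φ_comp := fun hpq hqr => M.φ_comp hpq hqr

/-- The generalized rank invariant: the generalized rank of the restriction
of `M` to `I`. -/
def rkInv (M : PersMod 𝔽 P) (I : Set P) : ℕ :=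
  if h : I.Nonempty then (M.restrict I).genRankAt ⟨h.choose, h.choose_spec⟩ else 0

/-- Finite direct sums of persistence modules. -/
def dSum {F : Type} [Fintype F] (Ms : F → PersMod 𝔽 P) : PersMod 𝔽 P where
  V := fun p => ∀ i, (Ms i).V p
  φ := fun {p q} h => LinearMap.pi fun i => ((Ms i).φ h).comp (LinearMap.proj i)
  φ_refl := by
    intro p
    refine LinearMap.ext fun x => funext fun i => ?_
    simp [(Ms i).φ_refl p]
  φ_comp := by
    intro p q r hpq hqr
    refine LinearMap.ext fun x => funext fun i => ?_
    simpa using LinearMap.congr_fun ((Ms i).φ_comp hpq hqr) (x i)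

/-- Binary direct sum of persistence modules. -/
def prodMod (M N : PersMod 𝔽 P) : PersMod 𝔽 P where
  V := fun p => M.V p × N.V p
  φ := fun h => (M.φ h).prodMap (N.φ h)
  φ_refl := by
    intro p
    refine LinearMap.ext fun x => ?_
    simp [M.φ_refl p, N.φ_refl p]
  φ_comp := by
    intro p q r h1 h2
    refine LinearMap.ext fun x => ?_
    have hM := LinearMap.congr_fun (M.φ_comp h1 h2) x.1
    have hN := LinearMap.congr_fun (N.φ_comp h1 h2) x.2
    simp only [LinearMap.comp_apply] at hM hN ⊢
    simp [hM, hN]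

/-- The zero persistence module. -/
def IsZero (M : PersMod 𝔽 P) : Prop := ∀ p, Subsingleton (M.V p)

/-- Isomorphism of persistence modules. -/
def Isom (M N : PersMod 𝔽 P) : Prop :=
  ∃ e : ∀ p, M.V p ≃ₗ[𝔽] N.V p,
    ∀ (p q : P) (h : p ≤ q) (v : M.V p), e q (M.φ h v) = N.φ h (e p v)

/-- Indecomposability of a persistence module. -/
def Indecomposable (M : PersMod 𝔽 P) : Prop :=
  ¬ M.IsZero ∧
    ∀ M₁ M₂ : PersMod 𝔽 P, M.Isom (M₁.prodMod M₂) → M₁.IsZero ∨ M₂.IsZero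

end PersMod

section IntervalModule

variable {P : Type} [PartialOrder P]

/-- The fiber of the interval module at `p`: all of `𝔽` if `p ∈ I`, and `0`
otherwise. -/
def fiber (𝔽 : Type) [Field 𝔽] (I : Set P) (p : P) : Submodule 𝔽 𝔽 where
  carrier := {x | p ∈ I ∨ x = 0}
  zero_mem' := Or.inr rfl
  add_mem' := by
    rintro x y (h | rfl) (h' | rfl)
    · exact Or.inl h
    · exact Or.inl h
    · exact Or.inl h'
    · exact Or.inr (add_zero 0)
  smul_mem' := by
    rintro c x (h | rfl)
    · exact Or.inl h
    · exact Or.inr (smul_zero c)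

/-- The interval module `V_I` of a convex subset `I ⊆ P`. -/
def intervalModule (𝔽 : Type) [Field 𝔽] (I : Set P) (hc : SetConvex I) :
    PersMod 𝔽 P where
  V := fun p => fiber 𝔽 I p
  φ := fun {p q} _h =>
    LinearMap.restrict (if q ∈ I then LinearMap.id else 0)
      (by
        intro x hx
        by_cases hq : q ∈ I
        · rw [if_pos hq]; exact Or.inl hq
        · rw [if_neg hq]; exact Or.inr rfl)
  φ_refl := by
    intro p
    refine LinearMap.ext fun x => Subtype.ext ?_
    rw [LinearMap.restrict_apply]
    by_cases hp : p ∈ I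
    · simp [hp]
    · rcases x.2 with h | h
      · exact absurd h hp
      · simp [hp, h]
  φ_comp := by
    intro p q r hpq hqr
    refine LinearMap.ext fun x => Subtype.ext ?_
    simp only [LinearMap.comp_apply, LinearMap.restrict_apply]
    by_cases hr : r ∈ I <;> by_cases hq : q ∈ I <;> simp [hr, hq]
    rcases x.2 with hp | h0
    · exact absurd (hc hp hr hpq hqr) hq
    · exact h0.symm

end IntervalModule

section Grid

variable {𝔽 : Type} [Field 𝔽]

lemma le_sub_e1 (p : ℤ × ℤ) : ((p.1 - 1, p.2) : ℤ × ℤ) ≤ p :=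
  Prod.le_def.mpr ⟨show p.1 - 1 ≤ p.1 by omega, le_rfl⟩

lemma le_sub_e2 (p : ℤ × ℤ) : ((p.1, p.2 - 1) : ℤ × ℤ) ≤ p :=
  Prod.le_def.mpr ⟨le_rfl, show p.2 - 1 ≤ p.2 by omega⟩

lemma le_sub_e12_e1 (p : ℤ × ℤ) : ((p.1 - 1, p.2 - 1) : ℤ × ℤ) ≤ (p.1 - 1, p.2) :=
  Prod.le_def.mpr ⟨le_rfl, show p.2 - 1 ≤ p.2 by omega⟩

lemma le_sub_e12_e2 (p : ℤ × ℤ) : ((p.1 - 1, p.2 - 1) : ℤ × ℤ) ≤ (p.1, p.2 - 1) :=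
  Prod.le_def.mpr ⟨show p.1 - 1 ≤ p.1 by omega, le_rfl⟩

/-- The `0`-th bigraded Betti number of `M : ℤ² → vec` at `p`, defined via the
Koszul complex as the dimension of the cokernel of
`M(p-e₁) ⊕ M(p-e₂) → M(p)`. -/
def beta0 (M : PersMod 𝔽 (ℤ × ℤ)) (p : ℤ × ℤ) : ℕ :=
  finrank 𝔽
    (M.V p ⧸ LinearMap.range ((M.φ (le_sub_e1 p)).coprod (M.φ (le_sub_e2 p))))

/-- The `2`-nd bigraded Betti number of `M : ℤ² → vec` at `p`, defined via the
Koszul complex as the dimension of the intersection of the kernels of the two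
structure maps out of `M(p-e₁-e₂)`. -/
def beta2 (M : PersMod 𝔽 (ℤ × ℤ)) (p : ℤ × ℤ) : ℕ :=
  finrank 𝔽
    ↥(LinearMap.ker (M.φ (le_sub_e12_e1 p)) ⊓ LinearMap.ker (M.φ (le_sub_e12_e2 p)))

/-- The `1`-st bigraded Betti number of `M : ℤ² → vec` at `p`, via the Koszul
complex characterization. -/
def beta1 (M : PersMod 𝔽 (ℤ × ℤ)) (p : ℤ × ℤ) : ℤ :=
  (beta0 M p : ℤ) + (beta2 M p : ℤ)
    - (finrank 𝔽 (M.V p) : ℤ) + (finrank 𝔽 (M.V (p.1 - 1, p.2)) : ℤ)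
    + (finrank 𝔽 (M.V (p.1, p.2 - 1)) : ℤ) - (finrank 𝔽 (M.V (p.1 - 1, p.2 - 1)) : ℤ)

/-- The maximal element of the grid `[m] × [n]` below a point `p ≥ (0,0)` of `ℤ²`. -/
def clamp (m n : ℕ) (p : ℤ × ℤ) : Fin (m + 1) × Fin (n + 1) :=
  (⟨min p.1.toNat m, Nat.lt_succ_of_le (min_le_right _ _)⟩,
   ⟨min p.2.toNat n, Nat.lt_succ_of_le (min_le_right _ _)⟩)

lemma clamp_mono {m n : ℕ} {p q : ℤ × ℤ} (h : p ≤ q) : clamp m n p ≤ clamp m n q := by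
  obtain ⟨h1, h2⟩ := Prod.le_def.mp h
  refine Prod.le_def.mpr ⟨?_, ?_⟩
  · exact Fin.mk_le_mk.mpr (min_le_min (Int.toNat_le_toNat h1) le_rfl)
  · exact Fin.mk_le_mk.mpr (min_le_min (Int.toNat_le_toNat h2) le_rfl)

/-- `M : ℤ² → vec` is encoded by `M' : [m] × [n] → vec`. -/
def IsEncodedBy {m n : ℕ} (M : PersMod 𝔽 (ℤ × ℤ))
    (M' : PersMod 𝔽 (Fin (m + 1) × Fin (n + 1))) : Prop :=
  (∀ p : ℤ × ℤ, ¬(0 ≤ p.1 ∧ 0 ≤ p.2) → Subsingleton (M.V p)) ∧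
  ∃ e : ∀ p : ℤ × ℤ, 0 ≤ p.1 → 0 ≤ p.2 → (M.V p ≃ₗ[𝔽] M'.V (clamp m n p)),
    ∀ (p q : ℤ × ℤ) (hp1 : 0 ≤ p.1) (hp2 : 0 ≤ p.2) (hq1 : 0 ≤ q.1) (hq2 : 0 ≤ q.2)
      (hpq : p ≤ q) (v : M.V p),
      e q hq1 hq2 (M.φ hpq v) = M'.φ (clamp_mono hpq) (e p hp1 hp2 v)

/-- A point `a ∈ ℤ²` "belongs" to `J ⊆ [m] × [n]` if it is a grid point lying in `J`. -/
def gridPt {m n : ℕ} (a : ℤ × ℤ) (J : Set (Fin (m + 1) × Fin (n + 1))) : Prop :=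
  ∃ x ∈ J, (((x.1 : ℕ) : ℤ), ((x.2 : ℕ) : ℤ)) = a

end Grid
/-- The three-element zigzag poset `•₁ ≤ •₂ ≥ •₃`. -/
inductive Zig3 : Type
  | p1 | p2 | p3
deriving DecidableEq

/-- Order relation of the zigzag poset `•₁ ≤ •₂ ≥ •₃`: `p1 ≤ p2` and `p3 ≤ p2`. -/
def Zig3.zle : Zig3 → Zig3 → Bool
  | .p1, .p1 => true
  | .p1, .p2 => true
  | .p2, .p2 => true
  | .p3, .p2 => true
  | .p3, .p3 => true
  | _, _ => false

instance : PartialOrder Zig3 where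
  le a b := Zig3.zle a b = true
  le_refl a := by cases a <;> rfl
  le_trans a b c h1 h2 := by
    cases a <;> cases b <;> cases c <;> simp_all [Zig3.zle]
  le_antisymm a b h1 h2 := by
    cases a <;> cases b <;> simp_all [Zig3.zle]

section ZigMod

variable {𝔽 : Type} [Field 𝔽] (V₁ V₂ V₃ : Type)
  [AddCommGroup V₁] [Module 𝔽 V₁] [AddCommGroup V₂] [Module 𝔽 V₂]
  [AddCommGroup V₃] [Module 𝔽 V₃]

/-- The underlying spaces of the zigzag module `V₁ → V₂ ← V₃`. -/
def zigV : Zig3 → Type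
  | .p1 => V₁
  | .p2 => V₂
  | .p3 => V₃

instance zigV.instAdd : ∀ x, AddCommGroup (zigV V₁ V₂ V₃ x)
  | .p1 => ‹_›
  | .p2 => ‹_›
  | .p3 => ‹_›

instance zigV.instMod : ∀ x, Module 𝔽 (zigV V₁ V₂ V₃ x)
  | .p1 => ‹_›
  | .p2 => ‹_›
  | .p3 => ‹_›

variable {V₁ V₂ V₃}

/-- The structure maps of the zigzag module determined by `f : V₁ → V₂` and
`g : V₃ → V₂`. -/
def zigφ (f : V₁ →ₗ[𝔽] V₂) (g : V₃ →ₗ[𝔽] V₂) :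
    ∀ p q : Zig3, zigV V₁ V₂ V₃ p →ₗ[𝔽] zigV V₁ V₂ V₃ q
  | .p1, .p1 => LinearMap.id
  | .p2, .p2 => LinearMap.id
  | .p3, .p3 => LinearMap.id
  | .p1, .p2 => f
  | .p3, .p2 => g
  | _, _ => 0

/-- The persistence module over the zigzag poset `•₁ ≤ •₂ ≥ •₃` determined by the
linear maps `f : V₁ → V₂` and `g : V₃ → V₂`. -/
def zigMod [FiniteDimensional 𝔽 V₁] [FiniteDimensional 𝔽 V₂] [FiniteDimensional 𝔽 V₃]
    (f : V₁ →ₗ[𝔽] V₂) (g : V₃ →ₗ[𝔽] V₂) : PersMod 𝔽 Zig3 where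
  V := zigV V₁ V₂ V₃
  iFin := fun x => by cases x <;> assumption
  φ := fun {p q} _h => zigφ f g p q
  φ_refl := fun p => by cases p <;> rfl
  φ_comp := fun {p q r} h1 h2 => by
    cases p <;> cases q <;> cases r <;>
      first
        | (have hz : Zig3.zle _ _ = true := h1; simp [Zig3.zle] at hz; done)
        | (have hz : Zig3.zle _ _ = true := h2; simp [Zig3.zle] at hz; done)
        | rfl

end ZigMod

/-! ### Auxiliary lemmas -/

section Aux

variable {𝔽 : Type} [Field 𝔽]

/-- Set equality in `Zig3` reduces to three membership equivalences. -/
lemma zig3_set_eq_iff (S T : Set Zig3) :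
    S = T ↔ ((Zig3.p1 ∈ S ↔ Zig3.p1 ∈ T) ∧ (Zig3.p2 ∈ S ↔ Zig3.p2 ∈ T)
      ∧ (Zig3.p3 ∈ S ↔ Zig3.p3 ∈ T)) := by
  constructor
  · rintro rfl; exact ⟨Iff.rfl, Iff.rfl, Iff.rfl⟩
  · rintro ⟨h1, h2, h3⟩
    ext x; cases x
    exacts [h1, h2, h3]

lemma zig3_le_iff (a b : Zig3) : a ≤ b ↔ Zig3.zle a b = true := Iff.rfl

/-- Classification of intervals of `Zig3`. -/
lemma zig3_interval_classify {I : Set Zig3} (h : IsIntervalSet I) :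
    I = {Zig3.p1} ∨ I = {Zig3.p2} ∨ I = {Zig3.p3} ∨ I = {Zig3.p1, Zig3.p2} ∨
      I = {Zig3.p2, Zig3.p3} ∨ I = {Zig3.p1, Zig3.p2, Zig3.p3} := by
  obtain ⟨hne, _hconv, hconn⟩ := h
  have key : Zig3.p1 ∈ I → Zig3.p3 ∈ I → Zig3.p2 ∈ I := by
    intro h1 h3
    by_contra h2
    have reach : ∀ x, Relation.ReflTransGen
        (fun a b : Zig3 => a ∈ I ∧ b ∈ I ∧ (a ≤ b ∨ b ≤ a)) Zig3.p1 x → x = Zig3.p1 := by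
      intro x hx
      induction hx with
      | refl => rfl
      | tail _hab hr ih =>
        subst ih
        obtain ⟨_, hb, hle⟩ := hr
        rename_i b _
        cases b with
        | p1 => rfl
        | p2 => exact absurd hb h2
        | p3 => rcases hle with hle | hle <;> exact Bool.noConfusion hle
    have := reach Zig3.p3 (hconn _ h1 _ h3)
    exact Zig3.noConfusion this
  by_cases h1 : Zig3.p1 ∈ I <;> by_cases h2 : Zig3.p2 ∈ I <;> by_cases h3 : Zig3.p3 ∈ I
  · exact Or.inr (Or.inr (Or.inr (Or.inr (Or.inr (by
      rw [zig3_set_eq_iff]; simp [h1, h2, h3]))))) 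
  · exact Or.inr (Or.inr (Or.inr (Or.inl (by
      rw [zig3_set_eq_iff]; simp [h1, h2, h3]))))
  · exact absurd (key h1 h3) h2
  · exact Or.inl (by rw [zig3_set_eq_iff]; simp [h1, h2, h3])
  · exact Or.inr (Or.inr (Or.inr (Or.inr (Or.inl (by
      rw [zig3_set_eq_iff]; simp [h1, h2, h3])))))
  · exact Or.inr (Or.inl (by rw [zig3_set_eq_iff]; simp [h1, h2, h3]))
  · exact Or.inr (Or.inr (Or.inl (by rw [zig3_set_eq_iff]; simp [h1, h2, h3])))
  · obtain ⟨x, hx⟩ := hne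
    cases x
    exacts [absurd hx h1, absurd hx h2, absurd hx h3]

variable {P : Type} [PartialOrder P]

lemma mem_fiber {I : Set P} {p : P} {x : 𝔽} : x ∈ fiber 𝔽 I p ↔ p ∈ I ∨ x = 0 := Iff.rfl

lemma fiber_eq_ite (I : Set P) (p : P) :
    fiber 𝔽 I p = if p ∈ I then (⊤ : Submodule 𝔽 𝔽) else ⊥ := by
  by_cases hp : p ∈ I
  · rw [if_pos hp]; ext x; simp [mem_fiber, hp]
  · rw [if_neg hp]; ext x; rw [mem_fiber, Submodule.mem_bot]
    exact ⟨fun h => h.resolve_left hp, Or.inr⟩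

lemma finrank_fiber (I : Set P) (p : P) :
    finrank 𝔽 (fiber 𝔽 I p) = if p ∈ I then 1 else 0 := by
  rw [fiber_eq_ite]
  by_cases hp : p ∈ I
  · rw [if_pos hp, if_pos hp, finrank_top, Module.finrank_self]
  · rw [if_neg hp, if_neg hp, finrank_bot]

/-- The structure map of the interval module, viewed between fibers. -/
def imφ (I : Set P) (hc : SetConvex I) {p q : P} (h : p ≤ q) :
    ↥(fiber 𝔽 I p) →ₗ[𝔽] ↥(fiber 𝔽 I q) := (intervalModule 𝔽 I hc).φ h

lemma imφ_val (I : Set P) (hc : SetConvex I) {p q : P} (h : p ≤ q)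
    (x : ↥(fiber 𝔽 I p)) :
    ((imφ I hc h x : ↥(fiber 𝔽 I q)) : 𝔽) = if q ∈ I then (x : 𝔽) else 0 := by
  have hrfl : imφ (𝔽 := 𝔽) I hc h = LinearMap.restrict
      (if q ∈ I then LinearMap.id else 0)
      (fun x _hx => by
        by_cases hq : q ∈ I
        · rw [if_pos hq]; exact Or.inl hq
        · rw [if_neg hq]; exact Or.inr (by simp)) := rfl
  rw [hrfl, LinearMap.restrict_apply]
  by_cases hq : q ∈ I <;> simp [hq]

lemma intervalModule_range (I : Set P) (hc : SetConvex I) {p q : P} (h : p ≤ q) :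
    LinearMap.range ((intervalModule 𝔽 I hc).φ h)
      = if p ∈ I ∧ q ∈ I then (⊤ : Submodule 𝔽 ((intervalModule 𝔽 I hc).V q)) else ⊥ := by
  show LinearMap.range (imφ I hc h) = if p ∈ I ∧ q ∈ I then ⊤ else ⊥
  by_cases hpq : p ∈ I ∧ q ∈ I
  · rw [if_pos hpq, LinearMap.range_eq_top]
    intro y
    refine ⟨⟨(y : 𝔽), Or.inl hpq.1⟩, Subtype.ext ?_⟩
    rw [imφ_val, if_pos hpq.2]
  · rw [if_neg hpq, eq_bot_iff]
    rintro y ⟨x, rfl⟩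
    have hv : ((imφ I hc h x : ↥(fiber 𝔽 I q)) : 𝔽) = 0 := by
      rw [imφ_val]
      by_cases hq : q ∈ I
      · have hp : p ∉ I := fun hp => hpq ⟨hp, hq⟩
        rw [if_pos hq, x.2.resolve_left hp]
      · rw [if_neg hq]
    rw [Submodule.mem_bot]
    exact Subtype.ext hv

lemma finrank_intervalModule_range (I : Set P) (hc : SetConvex I) {p q : P} (h : p ≤ q) :
    finrank 𝔽 (LinearMap.range ((intervalModule 𝔽 I hc).φ h))
      = if p ∈ I ∧ q ∈ I then 1 else 0 := by
  rw [intervalModule_range]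
  by_cases hpq : p ∈ I ∧ q ∈ I
  · rw [if_pos hpq, if_pos hpq, finrank_top]
    have := finrank_fiber (𝔽 := 𝔽) I q
    rw [if_pos hpq.2] at this
    exact this
  · rw [if_neg hpq, if_neg hpq]
    simp

/-- Range of a product of linear maps. -/
lemma range_pi_comp_proj {ι : Type} [Fintype ι] {M N : ι → Type}
    [∀ i, AddCommGroup (M i)] [∀ i, Module 𝔽 (M i)]
    [∀ i, AddCommGroup (N i)] [∀ i, Module 𝔽 (N i)]
    (f : ∀ i, M i →ₗ[𝔽] N i) :
    LinearMap.range (LinearMap.pi fun i => (f i).comp (LinearMap.proj i))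
      = Submodule.pi Set.univ fun i => LinearMap.range (f i) := by
  ext y
  constructor
  · rintro ⟨x, rfl⟩ i _
    exact ⟨x i, rfl⟩
  · intro hy
    choose x hx using fun i => hy i (Set.mem_univ i)
    exact ⟨x, funext hx⟩

lemma submodule_pi_inf {ι : Type} {M : ι → Type}
    [∀ i, AddCommGroup (M i)] [∀ i, Module 𝔽 (M i)]
    (p q : ∀ i, Submodule 𝔽 (M i)) :
    Submodule.pi Set.univ p ⊓ Submodule.pi Set.univ q
      = Submodule.pi Set.univ fun i => p i ⊓ q i := by
  ext x
  simp only [Submodule.mem_inf, Submodule.mem_pi, Set.mem_univ, forall_true_left]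
  exact ⟨fun ⟨h1, h2⟩ i => ⟨h1 i, h2 i⟩, fun h => ⟨fun i => (h i).1, fun i => (h i).2⟩⟩

lemma finrank_submodule_pi {ι : Type} [Fintype ι] {M : ι → Type}
    [∀ i, AddCommGroup (M i)] [∀ i, Module 𝔽 (M i)] [∀ i, FiniteDimensional 𝔽 (M i)]
    (p : ∀ i, Submodule 𝔽 (M i)) :
    finrank 𝔽 (Submodule.pi Set.univ p) = ∑ i, finrank 𝔽 (p i) := by
  classical
  have hrange : LinearMap.range
      (LinearMap.pi fun i => ((p i).subtype).comp (LinearMap.proj i))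
        = Submodule.pi Set.univ p := by
    rw [range_pi_comp_proj]
    congr 1
    funext i
    exact Submodule.range_subtype (p i)
  have hinj : Function.Injective
      (LinearMap.pi fun i => ((p i).subtype).comp (LinearMap.proj i)) := by
    intro x y hxy
    funext i
    have := congrFun hxy i
    exact Subtype.ext this
  have e := LinearEquiv.ofInjective _ hinj
  rw [← hrange, ← e.finrank_eq]
  exact Module.finrank_pi_fintype 𝔽

/-- Transport of ranges of structure maps along an isomorphism of persistence
modules. -/
lemma isom_map_range {M N : PersMod 𝔽 P}
    (e : ∀ p, M.V p ≃ₗ[𝔽] N.V p)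
    (he : ∀ (p q : P) (h : p ≤ q) (v : M.V p), e q (M.φ h v) = N.φ h (e p v))
    {p q : P} (h : p ≤ q) :
    Submodule.map ((e q : M.V q ≃ₗ[𝔽] N.V q) : M.V q →ₗ[𝔽] N.V q)
      (LinearMap.range (M.φ h)) = LinearMap.range (N.φ h) := by
  ext y
  constructor
  · rintro ⟨_, ⟨x, rfl⟩, rfl⟩
    exact ⟨e p x, by rw [LinearEquiv.coe_coe]; exact (he p q h x).symm⟩
  · rintro ⟨x, rfl⟩
    exact ⟨M.φ h ((e p).symm x), ⟨(e p).symm x, rfl⟩, by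
      rw [LinearEquiv.coe_coe, he p q h, LinearEquiv.apply_symm_apply]⟩

lemma finrank_intervalModule_range_inf (I : Set P) (hc : SetConvex I)
    {p q r : P} (hpq : p ≤ q) (hrq : r ≤ q) :
    finrank 𝔽 ↥(LinearMap.range ((intervalModule 𝔽 I hc).φ hpq)
        ⊓ LinearMap.range ((intervalModule 𝔽 I hc).φ hrq))
      = if p ∈ I ∧ q ∈ I ∧ r ∈ I then 1 else 0 := by
  rw [intervalModule_range, intervalModule_range]
  by_cases h1 : p ∈ I ∧ q ∈ I
  · by_cases h2 : r ∈ I ∧ q ∈ I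
    · rw [if_pos h1, if_pos h2, if_pos ⟨h1.1, h1.2, h2.1⟩, top_inf_eq, finrank_top]
      have hf := finrank_fiber (𝔽 := 𝔽) I q
      rw [if_pos h1.2] at hf
      exact hf
    · rw [if_pos h1, if_neg h2, if_neg (fun hh => h2 ⟨hh.2.2, hh.2.1⟩), inf_bot_eq,
        finrank_bot]
  · rw [if_neg h1, bot_inf_eq, if_neg (fun hh => h1 ⟨hh.1, hh.2.1⟩), finrank_bot]

end Aux

/-- Interval multiplicities of a zigzag module
`V₁ —f→ V₂ ←g— V₃` over the poset `•₁ ≤ •₂ ≥ •₃`, in terms of ranks of `f`, `g`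
and the dimension of `range f ∩ range g`. -/
theorem zigzag_multiplicities (𝔽 : Type) [Field 𝔽] (V₁ V₂ V₃ : Type)
    [AddCommGroup V₁] [Module 𝔽 V₁] [FiniteDimensional 𝔽 V₁]
    [AddCommGroup V₂] [Module 𝔽 V₂] [FiniteDimensional 𝔽 V₂]
    [AddCommGroup V₃] [Module 𝔽 V₃] [FiniteDimensional 𝔽 V₃]
    (f : V₁ →ₗ[𝔽] V₂) (g : V₃ →ₗ[𝔽] V₂)
    (F : Type) [Fintype F] (Is : F → Set Zig3) (hI : ∀ i, IsIntervalSet (Is i))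
    (hiso : (zigMod f g).Isom (PersMod.dSum fun i => intervalModule 𝔽 (Is i) (hI i).2.1)) :
    (Nat.card {i : F // Is i = {Zig3.p1}} : ℤ)
        = (Module.finrank 𝔽 V₁ : ℤ) - (Module.finrank 𝔽 (LinearMap.range f) : ℤ) ∧
    (Nat.card {i : F // Is i = {Zig3.p3}} : ℤ)
        = (Module.finrank 𝔽 V₃ : ℤ) - (Module.finrank 𝔽 (LinearMap.range g) : ℤ) ∧
    (Nat.card {i : F // Is i = {Zig3.p2}} : ℤ)
        = (Module.finrank 𝔽 V₂ : ℤ) - (Module.finrank 𝔽 (LinearMap.range f) : ℤ)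
          - (Module.finrank 𝔽 (LinearMap.range g) : ℤ)
          + (Module.finrank 𝔽 ↥(LinearMap.range f ⊓ LinearMap.range g) : ℤ) ∧
    (Nat.card {i : F // Is i = {Zig3.p1, Zig3.p2}} : ℤ)
        = (Module.finrank 𝔽 (LinearMap.range f) : ℤ)
          - (Module.finrank 𝔽 ↥(LinearMap.range f ⊓ LinearMap.range g) : ℤ) ∧
    (Nat.card {i : F // Is i = {Zig3.p2, Zig3.p3}} : ℤ)
        = (Module.finrank 𝔽 (LinearMap.range g) : ℤ)
          - (Module.finrank 𝔽 ↥(LinearMap.range f ⊓ LinearMap.range g) : ℤ) ∧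
    (Nat.card {i : F // Is i = {Zig3.p1, Zig3.p2, Zig3.p3}} : ℤ)
        = (Module.finrank 𝔽 ↥(LinearMap.range f ⊓ LinearMap.range g) : ℤ) := by
  classical
  set N := PersMod.dSum fun i => intervalModule 𝔽 (Is i) (hI i).2.1 with hN
  obtain ⟨e, he⟩ := hiso
  have h12 : (Zig3.p1 : Zig3) ≤ Zig3.p2 := rfl
  have h32 : (Zig3.p3 : Zig3) ≤ Zig3.p2 := rfl
  -- dimensions of the direct sum of interval modules
  have hdim : ∀ p : Zig3, finrank 𝔽 (N.V p)
      = ∑ i, if p ∈ Is i then 1 else 0 := by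
    intro p
    have h1 : finrank 𝔽 (N.V p)
        = ∑ i, finrank 𝔽 ((intervalModule 𝔽 (Is i) (hI i).2.1).V p) :=
      Module.finrank_pi_fintype 𝔽
    rw [h1]
    exact Finset.sum_congr rfl fun i _ => finrank_fiber _ _
  have hNrange : ∀ {p q : Zig3} (h : p ≤ q), LinearMap.range (N.φ h)
      = Submodule.pi Set.univ fun i =>
          LinearMap.range ((intervalModule 𝔽 (Is i) (hI i).2.1).φ h) := by
    intro p q h
    exact range_pi_comp_proj fun i => (intervalModule 𝔽 (Is i) (hI i).2.1).φ h
  have hrank : ∀ {p q : Zig3} (h : p ≤ q), finrank 𝔽 (LinearMap.range (N.φ h))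
      = ∑ i, if p ∈ Is i ∧ q ∈ Is i then 1 else 0 := by
    intro p q h
    rw [hNrange h]
    refine (finrank_submodule_pi _).trans ?_
    exact Finset.sum_congr rfl fun i _ => finrank_intervalModule_range _ _ h
  have hinter : finrank 𝔽 ↥(LinearMap.range (N.φ h12) ⊓ LinearMap.range (N.φ h32))
      = ∑ i, if Zig3.p1 ∈ Is i ∧ Zig3.p2 ∈ Is i ∧ Zig3.p3 ∈ Is i then 1 else 0 := by
    rw [hNrange h12, hNrange h32]; erw [submodule_pi_inf]
    refine (finrank_submodule_pi _).trans ?_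
    exact Finset.sum_congr rfl fun i _ =>
      finrank_intervalModule_range_inf _ _ h12 h32
  -- transfer along the isomorphism
  have E1 : finrank 𝔽 V₁ = ∑ i, if Zig3.p1 ∈ Is i then 1 else 0 := by
    rw [← hdim Zig3.p1]; exact (e Zig3.p1).finrank_eq
  have E2 : finrank 𝔽 V₂ = ∑ i, if Zig3.p2 ∈ Is i then 1 else 0 := by
    rw [← hdim Zig3.p2]; exact (e Zig3.p2).finrank_eq
  have E3 : finrank 𝔽 V₃ = ∑ i, if Zig3.p3 ∈ Is i then 1 else 0 := by
    rw [← hdim Zig3.p3]; exact (e Zig3.p3).finrank_eq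
  have hm12 := isom_map_range e he h12
  have hm32 := isom_map_range e he h32
  have E4 : finrank 𝔽 (LinearMap.range f)
      = ∑ i, if Zig3.p1 ∈ Is i ∧ Zig3.p2 ∈ Is i then 1 else 0 := by
    rw [← hrank h12, ← hm12]
    exact ((e Zig3.p2).finrank_map_eq
      (LinearMap.range ((zigMod f g).φ h12))).symm
  have E5 : finrank 𝔽 (LinearMap.range g)
      = ∑ i, if Zig3.p3 ∈ Is i ∧ Zig3.p2 ∈ Is i then 1 else 0 := by
    rw [← hrank h32, ← hm32]
    exact ((e Zig3.p2).finrank_map_eq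
      (LinearMap.range ((zigMod f g).φ h32))).symm
  have E6 : finrank 𝔽 ↥(LinearMap.range f ⊓ LinearMap.range g)
      = ∑ i, if Zig3.p1 ∈ Is i ∧ Zig3.p2 ∈ Is i ∧ Zig3.p3 ∈ Is i then 1 else 0 := by
    have hmapinf : Submodule.map
        ((e Zig3.p2 : (zigMod f g).V Zig3.p2 ≃ₗ[𝔽] N.V Zig3.p2) :
          (zigMod f g).V Zig3.p2 →ₗ[𝔽] N.V Zig3.p2)
        (LinearMap.range ((zigMod f g).φ h12) ⊓ LinearMap.range ((zigMod f g).φ h32))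
        = LinearMap.range (N.φ h12) ⊓ LinearMap.range (N.φ h32) := by
      rw [Submodule.map_inf ((e Zig3.p2 : (zigMod f g).V Zig3.p2 ≃ₗ[𝔽] N.V Zig3.p2) :
        (zigMod f g).V Zig3.p2 →ₗ[𝔽] N.V Zig3.p2) (e Zig3.p2).injective, hm12, hm32]
    rw [← hinter, ← hmapinf]
    exact ((e Zig3.p2).finrank_map_eq
      (LinearMap.range ((zigMod f g).φ h12)
        ⊓ LinearMap.range ((zigMod f g).φ h32))).symm
  -- integer versions
  have E1' : (finrank 𝔽 V₁ : ℤ) = ∑ i, if Zig3.p1 ∈ Is i then (1 : ℤ) else 0 := by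
    exact_mod_cast congrArg (Nat.cast (R := ℤ)) E1
  have E2' : (finrank 𝔽 V₂ : ℤ) = ∑ i, if Zig3.p2 ∈ Is i then (1 : ℤ) else 0 := by
    exact_mod_cast congrArg (Nat.cast (R := ℤ)) E2
  have E3' : (finrank 𝔽 V₃ : ℤ) = ∑ i, if Zig3.p3 ∈ Is i then (1 : ℤ) else 0 := by
    exact_mod_cast congrArg (Nat.cast (R := ℤ)) E3
  have E4' : (finrank 𝔽 (LinearMap.range f) : ℤ)
      = ∑ i, if Zig3.p1 ∈ Is i ∧ Zig3.p2 ∈ Is i then (1 : ℤ) else 0 := by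
    exact_mod_cast congrArg (Nat.cast (R := ℤ)) E4
  have E5' : (finrank 𝔽 (LinearMap.range g) : ℤ)
      = ∑ i, if Zig3.p3 ∈ Is i ∧ Zig3.p2 ∈ Is i then (1 : ℤ) else 0 := by
    exact_mod_cast congrArg (Nat.cast (R := ℤ)) E5
  have E6' : (finrank 𝔽 ↥(LinearMap.range f ⊓ LinearMap.range g) : ℤ)
      = ∑ i, if Zig3.p1 ∈ Is i ∧ Zig3.p2 ∈ Is i ∧ Zig3.p3 ∈ Is i then (1 : ℤ) else 0 := by
    exact_mod_cast congrArg (Nat.cast (R := ℤ)) E6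
  have hcard : ∀ S : Set Zig3, (Nat.card {i : F // Is i = S} : ℤ)
      = ∑ i, if Is i = S then (1 : ℤ) else 0 := by
    intro S
    rw [Nat.card_eq_fintype_card, Fintype.card_subtype, Finset.card_filter]
    push_cast
    rfl
  refine ⟨?_, ?_, ?_, ?_, ?_, ?_⟩
  · rw [hcard, E1', E4', ← Finset.sum_sub_distrib]
    refine Finset.sum_congr rfl fun i _ => ?_
    rcases zig3_interval_classify (hI i) with h | h | h | h | h | h <;> rw [h] <;>
      simp [zig3_set_eq_iff]
  · rw [hcard, E3', E5', ← Finset.sum_sub_distrib]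
    refine Finset.sum_congr rfl fun i _ => ?_
    rcases zig3_interval_classify (hI i) with h | h | h | h | h | h <;> rw [h] <;>
      simp [zig3_set_eq_iff]
  · rw [hcard, E2', E4', E5', E6', ← Finset.sum_sub_distrib,
      ← Finset.sum_sub_distrib, ← Finset.sum_add_distrib]
    refine Finset.sum_congr rfl fun i _ => ?_
    rcases zig3_interval_classify (hI i) with h | h | h | h | h | h <;> rw [h] <;>
      simp [zig3_set_eq_iff]
  · rw [hcard, E4', E6', ← Finset.sum_sub_distrib]
    refine Finset.sum_congr rfl fun i _ => ?_
    rcases zig3_interval_classify (hI i) with h | h | h | h | h | h <;> rw [h] <;>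
      simp [zig3_set_eq_iff]
  · rw [hcard, E5', E6', ← Finset.sum_sub_distrib]
    refine Finset.sum_congr rfl fun i _ => ?_
    rcases zig3_interval_classify (hI i) with h | h | h | h | h | h <;> rw [h] <;>
      simp [zig3_set_eq_iff]
  · rw [hcard, E6']
    refine Finset.sum_congr rfl fun i _ => ?_
    rcases zig3_interval_classify (hI i) with h | h | h | h | h | h <;> rw [h] <;>
      simp [zig3_set_eq_iff]
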